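/- arXiv:1607.02988 — 7 statements merged into one kernel-verified Lean document; each statement's English description precedes it below -/
import Mathlib

section
/- For a surjective function π : E → A, the space Sec(π) with distance δ(f,g) = {a ∈ A | f(a) ≠ g(a)} is spherically complete: every chain of balls {B(f_i, α_i) | i ∈ I} has nonempty intersection. -/
/-- The space of sections of a surjection π : E → A is spherically complete:
every chain of balls has nonempty intersection. -/
theorem stmt_4 {E A : Type*} (π : E → A) (hπ : Function.Surjective π)
    {I : Type*} (f : I → {s : A → E // ∀ a, π (s a) = a}) (α : I → Set A)
    (hchain : ∀ i j : I,
      {g : {s : A → E // ∀ a, π (s a) = a} | {a : A | (f i).1 a ≠ g.1 a} ⊆ α i} ⊆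
        {g : {s : A → E // ∀ a, π (s a) = a} | {a : A | (f j).1 a ≠ g.1 a} ⊆ α j} ∨
      {g : {s : A → E // ∀ a, π (s a) = a} | {a : A | (f j).1 a ≠ g.1 a} ⊆ α j} ⊆
        {g : {s : A → E // ∀ a, π (s a) = a} | {a : A | (f i).1 a ≠ g.1 a} ⊆ α i}) :
    (⋂ i : I,
      {g : {s : A → E // ∀ a, π (s a) = a} | {a : A | (f i).1 a ≠ g.1 a} ⊆ α i}).Nonempty := by
  classical
  -- each center lies in its own ball
  have hself : ∀ i : I, {a : A | (f i).1 a ≠ (f i).1 a} ⊆ α i := by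
    intro i a ha; exact absurd rfl ha
  -- key: centers agree outside both radii
  have hkey : ∀ i j : I, ∀ a : A, a ∉ α i → a ∉ α j → (f i).1 a = (f j).1 a := by
    intro i j a hi hj
    rcases hchain i j with h | h
    · have : (f i) ∈ {g : {s : A → E // ∀ a, π (s a) = a} |
        {a : A | (f j).1 a ≠ g.1 a} ⊆ α j} := h (hself i)
      by_contra hne
      exact hj (this (Ne.symm hne))
    · have : (f j) ∈ {g : {s : A → E // ∀ a, π (s a) = a} |
        {a : A | (f i).1 a ≠ g.1 a} ⊆ α i} := h (hself j)
      by_contra hne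
      exact hi (this hne)
  -- define the glued section
  set gfun : A → E := fun a =>
    if h : ∃ i : I, a ∉ α i then (f h.choose).1 a else (hπ a).choose with hg
  have hgsec : ∀ a, π (gfun a) = a := by
    intro a
    by_cases h : ∃ i : I, a ∉ α i
    · simp only [hg, dif_pos h]; exact (f h.choose).2 a
    · simp only [hg, dif_neg h]; exact (hπ a).choose_spec
  refine ⟨⟨gfun, hgsec⟩, ?_⟩
  simp only [Set.mem_iInter, Set.mem_setOf_eq]
  intro i a ha
  by_contra hai
  have h : ∃ j : I, a ∉ α j := ⟨i, hai⟩
  have : gfun a = (f h.choose).1 a := by simp only [hg, dif_pos h]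
  exact ha (by rw [this]; exact hkey i h.choose a hai h.choose_spec)
end

section
/- Every reduced symmetric ultrametric space (X, δ) over P(A) admits an isometry into a space of sections: the map ψ sending f to the vector ⟨B(f, A∖{a})⟩_{a∈A} is an injective map into Sec(π), where π : Σ_{a∈A} D_a → A with D_a the set of balls B(f, A∖{a}), and it satisfies δ(ψ(f), ψ(g)) = δ(f,g). -/
/-- Every reduced symmetric ultrametric space over P(A) embeds isometrically
into a space of sections, via ψ(f) = ⟨B(f, A∖{a})⟩_{a∈A}. -/
theorem stmt_6 {A X : Type*} (δ : X → X → Set A)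
    (h_refl : ∀ f : X, δ f f = ∅)
    (h_tri : ∀ f g h : X, δ f g ⊆ δ f h ∪ δ h g)
    (h_red : ∀ f g : X, δ f g = ∅ → f = g)
    (h_sym : ∀ f g : X, δ f g = δ g f) :
    ∃ ψ : X → (A → Set X),
      (∀ (f : X) (a : A), ψ f a = {g : X | δ f g ⊆ Set.univ \ {a}}) ∧
      (∀ (f : X) (a : A), ψ f a ∈ {s : Set X | ∃ g : X, s = {x : X | δ g x ⊆ Set.univ \ {a}}}) ∧
      Function.Injective ψ ∧
      (∀ f g : X, {a : A | ψ f a ≠ ψ g a} = δ f g) := by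
  have hsub : ∀ (f g : X) (a : A), δ f g ⊆ Set.univ \ {a} ↔ a ∉ δ f g := by
    intro f g a
    constructor
    · intro h ha
      exact (h ha).2 rfl
    · intro ha x hx
      exact ⟨trivial, fun hxa => ha (hxa ▸ hx)⟩
  have key : ∀ (f g : X) (a : A),
      ({x : X | δ f x ⊆ Set.univ \ {a}} = {x : X | δ g x ⊆ Set.univ \ {a}}) ↔ a ∉ δ f g := by
    intro f g a
    constructor
    · intro h ha
      have hf : f ∈ {x : X | δ f x ⊆ Set.univ \ {a}} := by
        simp only [Set.mem_setOf_eq, h_refl]; exact Set.empty_subset _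
      rw [h] at hf
      exact ((hsub g f a).1 hf) (h_sym f g ▸ ha)
    · intro ha
      ext x
      simp only [Set.mem_setOf_eq, hsub]
      constructor
      · intro hx hax
        rcases h_tri g x f hax with h1 | h1
        · exact ha (h_sym f g ▸ h1)
        · exact hx (h_sym x f ▸ h1)
      · intro hx hax
        rcases h_tri f x g hax with h1 | h1
        · exact ha h1
        · exact hx (h_sym x g ▸ h1)
  have last : ∀ f g : X, {a : A | ¬({x : X | δ f x ⊆ Set.univ \ {a}} =
      {x : X | δ g x ⊆ Set.univ \ {a}})} = δ f g := by
    intro f g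
    ext a
    simp only [Set.mem_setOf_eq, key, not_not]
  refine ⟨fun f a => {g : X | δ f g ⊆ Set.univ \ {a}}, fun f a => rfl,
    fun f a => ⟨f, rfl⟩, ?_, ?_⟩
  · intro f g h
    apply h_red
    rw [← last f g]
    ext a
    simp [congrFun h a]
  · intro f g
    exact last f g
end

section
/- A continuous subspace Y of a pairwise complete reduced symmetric space X is itself pairwise complete. -/
/-- A continuous subspace of a pairwise complete space is pairwise complete. -/
theorem stmt_8 {A X : Type*} (δ : X → X → Set A)
    (h_refl : ∀ f : X, δ f f = ∅)
    (h_tri : ∀ f g h : X, δ f g ⊆ δ f h ∪ δ h g)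
    (h_red : ∀ f g : X, δ f g = ∅ → f = g)
    (h_sym : ∀ f g : X, δ f g = δ g f)
    (h_pc : ∀ (f g : X) (α β : Set A), δ f g ⊆ α ∪ β →
      ∃ h : X, δ f h ⊆ α ∧ δ h g ⊆ β)
    (Y : Set X)
    (h_cont : ∀ f : X, (⋂ g ∈ Y, δ f g) = ∅ → f ∈ Y) :
    ∀ f ∈ Y, ∀ g ∈ Y, ∀ α β : Set A, δ f g ⊆ α ∪ β →
      ∃ h ∈ Y, δ f h ⊆ α ∧ δ h g ⊆ β := by
  intro f hf g hg α β hsub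
  obtain ⟨h, h1, h2⟩ := h_pc f g (δ f g ∩ α) (δ f g \ α) (by
    intro x hx
    by_cases hxa : x ∈ α
    · exact Or.inl ⟨hx, hxa⟩
    · exact Or.inr ⟨hx, hxa⟩)
  have hhY : h ∈ Y := by
    apply h_cont
    have : (⋂ g ∈ Y, δ h g) ⊆ (δ f g ∩ α) ∩ (δ f g \ α) := by
      intro x hx
      have hxf : x ∈ δ h f := Set.mem_iInter₂.mp hx f hf
      have hxg : x ∈ δ h g := Set.mem_iInter₂.mp hx g hg
      exact ⟨h1 (by rwa [h_sym] at hxf), h2 hxg⟩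
    refine Set.eq_empty_iff_forall_notMem.mpr fun x hx => ?_
    obtain ⟨⟨_, ha⟩, _, hna⟩ := this hx
    exact hna ha
  refine ⟨h, hhY, fun x hx => (h1 hx).2, fun x hx => ?_⟩
  have := h2 hx
  cases hsub this.1 with
  | inl ha => exact absurd ha this.2
  | inr hb => exact hb
end

section
/- If Y is a pairwise complete subspace of a space X, then for each f ∈ X the family {α ⊆ A | B(f,α) ∩ Y ≠ ∅} is closed under finite (binary) intersections. -/
/-- If Y is a pairwise complete subspace of X then, for each f ∈ X, the family
{α ⊆ A | B(f,α) ∩ Y ≠ ∅} is closed under binary intersections. -/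
theorem stmt_10 {A X : Type*} (δ : X → X → Set A)
    (h_refl : ∀ f : X, δ f f = ∅)
    (h_tri : ∀ f g h : X, δ f g ⊆ δ f h ∪ δ h g)
    (h_red : ∀ f g : X, δ f g = ∅ → f = g)
    (h_sym : ∀ f g : X, δ f g = δ g f)
    (Y : Set X)
    (h_pcY : ∀ f ∈ Y, ∀ g ∈ Y, ∀ α β : Set A, δ f g ⊆ α ∪ β →
      ∃ h ∈ Y, δ f h ⊆ α ∧ δ h g ⊆ β)
    (f : X) (α β : Set A)
    (hα : ({g : X | δ f g ⊆ α} ∩ Y).Nonempty)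
    (hβ : ({g : X | δ f g ⊆ β} ∩ Y).Nonempty) :
    ({g : X | δ f g ⊆ α ∩ β} ∩ Y).Nonempty := by
  obtain ⟨a, ha, haY⟩ := hα
  obtain ⟨b, hb, hbY⟩ := hβ
  have hab : δ a b ⊆ α ∪ β := by
    intro x hx
    rcases h_tri a b f hx with hx | hx
    · left; rw [h_sym] at hx; exact ha hx
    · right; exact hb hx
  obtain ⟨h, hY, hah, hhb⟩ := h_pcY a haY b hbY α β hab
  refine ⟨h, ?_, hY⟩
  intro x hx
  constructor
  · rcases h_tri f h a hx with hx' | hx'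
    · exact ha hx'
    · exact hah hx'
  · rcases h_tri f h b hx with hx' | hx'
    · exact hb hx'
    · rw [h_sym] at hx'; exact hhb hx'
end

section
/- For any subset Y of a space X, the maps ν : Sub(X) → Modules(X) (where ν_Y(f) = ⋂_{g∈Y} δ(f,g)) and S : Modules(X) → Sub(X) (where S_v = {x | v(x) = ∅}) form a Galois adjunction: Y ⊆ S_{ν_Y} and ν_{S_v} ≤ v, where modules are ordered by reverse pointwise inclusion and subspaces by inclusion. -/
/-- The maps ν and S form a Galois adjunction: Y ⊆ S_{ν_Y} and ν_{S_v} ≤ v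
(i.e. v f ⊆ ν_{S_v} f), modules being ordered by reverse pointwise inclusion. -/
theorem stmt_13 {A X : Type*} (δ : X → X → Set A)
    (h_refl : ∀ f : X, δ f f = ∅)
    (h_tri : ∀ f g h : X, δ f g ⊆ δ f h ∪ δ h g)
    (h_red : ∀ f g : X, δ f g = ∅ → f = g)
    (h_sym : ∀ f g : X, δ f g = δ g f) :
    (∀ Y : Set X, Y ⊆ {x : X | (⋂ g ∈ Y, δ x g) = ∅}) ∧
    (∀ v : X → Set A, (∀ f g : X, v f ⊆ δ f g ∪ v g) →
      ∀ f : X, v f ⊆ ⋂ g ∈ {x : X | v x = ∅}, δ f g) := by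
  constructor
  · intro Y x hx
    have : (⋂ g ∈ Y, δ x g) ⊆ δ x x := Set.biInter_subset_of_mem hx
    simpa [h_refl x, Set.subset_empty_iff] using this
  · intro v hv f a ha
    simp only [Set.mem_iInter, Set.mem_setOf_eq]
    intro g hg
    have := hv f g ha
    rw [hg] at this
    simpa using this
end

section
/- A subspace Y of X is continuous if and only if S_{ν_Y} = Y. Consequently, for any Y ⊆ X, S_{ν_Y} is the least continuous subspace of X containing Y. -/
/-- Y is continuous iff S_{ν_Y} = Y; consequently S_{ν_Y} is the least
continuous subspace containing Y. -/
theorem stmt_15 {A X : Type*} (δ : X → X → Set A)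
    (h_refl : ∀ f : X, δ f f = ∅)
    (h_tri : ∀ f g h : X, δ f g ⊆ δ f h ∪ δ h g)
    (h_red : ∀ f g : X, δ f g = ∅ → f = g)
    (h_sym : ∀ f g : X, δ f g = δ g f) :
    (∀ Y : Set X,
      ((∀ f : X, (⋂ g ∈ Y, δ f g) = ∅ → f ∈ Y) ↔
        {x : X | (⋂ g ∈ Y, δ x g) = ∅} = Y)) ∧
    (∀ Y : Set X,
      Y ⊆ {x : X | (⋂ g ∈ Y, δ x g) = ∅} ∧
      (∀ f : X, (⋂ g ∈ {x : X | (⋂ g' ∈ Y, δ x g') = ∅}, δ f g) = ∅ →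
        f ∈ {x : X | (⋂ g' ∈ Y, δ x g') = ∅}) ∧
      (∀ Z : Set X, (∀ f : X, (⋂ g ∈ Z, δ f g) = ∅ → f ∈ Z) → Y ⊆ Z →
        {x : X | (⋂ g ∈ Y, δ x g) = ∅} ⊆ Z)) := by
  -- Y ⊆ S_{ν_Y}
  have hsub : ∀ Y : Set X, Y ⊆ {x : X | (⋂ g ∈ Y, δ x g) = ∅} := by
    intro Y f hf
    simp only [Set.mem_setOf_eq, Set.eq_empty_iff_forall_notMem, Set.mem_iInter]
    intro a ha
    have := ha f hf
    rw [h_refl] at this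
    exact this
  -- S_{ν_Y} is continuous
  have hcont : ∀ Y : Set X, ∀ f : X,
      (⋂ g ∈ {x : X | (⋂ g' ∈ Y, δ x g') = ∅}, δ f g) = ∅ →
      f ∈ {x : X | (⋂ g' ∈ Y, δ x g') = ∅} := by
    intro Y f hf
    simp only [Set.mem_setOf_eq, Set.eq_empty_iff_forall_notMem, Set.mem_iInter]
    intro a ha
    -- show a ∈ ⋂_{g ∈ S} δ f g, contradicting hf
    rw [Set.eq_empty_iff_forall_notMem] at hf
    apply hf a
    rw [Set.mem_iInter₂]
    intro g hg
    rw [Set.mem_setOf_eq, Set.eq_empty_iff_forall_notMem] at hg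
    have := hg a
    rw [Set.mem_iInter₂] at this
    push_neg at this
    obtain ⟨h, hhY, hah⟩ := this
    have hafh : a ∈ δ f h := ha h hhY
    rcases h_tri f h g hafh with h1 | h1
    · exact h1
    · exact absurd h1 hah
  constructor
  · intro Y
    constructor
    · intro hc
      apply Set.Subset.antisymm
      · intro x hx; exact hc x hx
      · exact hsub Y
    · intro heq f hf
      rw [← heq]; exact hf
  · intro Y
    refine ⟨hsub Y, hcont Y, ?_⟩
    intro Z hZ hYZ x hx
    apply hZ
    rw [Set.eq_empty_iff_forall_notMem]
    intro a ha
    rw [Set.mem_setOf_eq, Set.eq_empty_iff_forall_notMem] at hx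
    apply hx a
    rw [Set.mem_iInter₂] at ha ⊢
    intro g hg
    exact ha g (hYZ hg)
end

section
/- Let X be a pairwise complete reduced symmetric space over P(A) with A nonempty. A module v on X satisfies ν_{S_v} = v if and only if either v(f) = A for all f ∈ X, or v(f) = ∅ for some f ∈ X. -/
/-- In a pairwise complete space with A nonempty, a module v satisfies
ν_{S_v} = v iff v is constantly A or v vanishes somewhere. -/
theorem stmt_16 {A X : Type*} [Nonempty A] (δ : X → X → Set A)
    (h_refl : ∀ f : X, δ f f = ∅)
    (h_tri : ∀ f g h : X, δ f g ⊆ δ f h ∪ δ h g)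
    (h_red : ∀ f g : X, δ f g = ∅ → f = g)
    (h_sym : ∀ f g : X, δ f g = δ g f)
    (h_pc : ∀ (f g : X) (α β : Set A), δ f g ⊆ α ∪ β →
      ∃ h : X, δ f h ⊆ α ∧ δ h g ⊆ β)
    (v : X → Set A) (h_mod : ∀ f g : X, v f ⊆ δ f g ∪ v g) :
    (∀ f : X, (⋂ g ∈ {x : X | v x = ∅}, δ f g) = v f) ↔
    ((∀ f : X, v f = Set.univ) ∨ (∃ f : X, v f = ∅)) := by
  constructor
  · intro h
    by_cases he : ∃ f : X, v f = ∅
    · exact Or.inr he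
    · left
      intro f
      rw [← h f]
      have : {x : X | v x = ∅} = ∅ := by
        ext x; simp only [Set.mem_setOf_eq, Set.mem_empty_iff_false, iff_false]
        exact fun hx => he ⟨x, hx⟩
      rw [this]
      simp
  · rintro (hall | ⟨g₀, hg₀⟩)
    · intro f
      have : {x : X | v x = ∅} = ∅ := by
        ext x; simp only [Set.mem_setOf_eq, Set.mem_empty_iff_false, iff_false]
        intro hx
        have := hall x
        rw [hx] at this
        exact (Set.empty_ne_univ this).elim
      rw [this, hall f]
      simp
    · intro f
      apply Set.Subset.antisymm
      · -- ⋂ ⊆ v f : use pairwise completeness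
        obtain ⟨h, hfh, hhg⟩ := h_pc f g₀ (v f) (v f)ᶜ
          (by rw [Set.union_compl_self]; exact Set.subset_univ _)
        have hvh : v h = ∅ := by
          have h1 : v h ⊆ (v f)ᶜ := by
            intro x hx
            rcases h_mod h g₀ hx with hx' | hx'
            · exact hhg hx'
            · rw [hg₀] at hx'; exact hx'.elim
          have h2 : v h ⊆ v f := by
            intro x hx
            rcases h_mod h f hx with hx' | hx'
            · exact hfh (by rwa [h_sym] at hx')
            · exact hx'
          ext x
          simp only [Set.mem_empty_iff_false, iff_false]
          exact fun hx => h1 hx (h2 hx)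
        intro x hx
        have : x ∈ δ f h := by
          have := Set.mem_iInter₂.mp hx h hvh
          exact this
        exact hfh this
      · -- v f ⊆ ⋂
        intro x hx
        apply Set.mem_iInter₂.mpr
        intro g hg
        rcases h_mod f g hx with hx' | hx'
        · exact hx'
        · rw [hg] at hx'; exact hx'.elim
end
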